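/- Let M be a monoid and A a finite set. A subshift X ⊆ A^M is of finite type if and only if the dynamical system (X,M) has the pseudo-orbit tracing property. -/

import Mathlib

open Filter Set
open scoped Pointwise

section aux

variable {M A : Type*} [Monoid M] [Finite A] [UniformSpace A] [DiscreteTopology A]

lemma aux_uA : uniformity A = Filter.principal SetRel.id := by
  have : CompactSpace A := Finite.compactSpace
  rw [← nhdsSet_diagonal_eq_uniformity, (isOpen_discrete _).nhdsSet_eq]
  rfl

lemma aux_pi_basis (S : Set ((M → A) × (M → A))) :
    S ∈ uniformity (M → A) ↔
      ∃ F : Finset M, {p : (M → A) × (M → A) | ∀ i ∈ F, p.1 i = p.2 i} ⊆ S := by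
  have hpi : uniformity (M → A)
      = ⨅ i : M, Filter.principal {p : (M → A) × (M → A) | p.1 i = p.2 i} := by
    rw [Pi.uniformity]
    refine iInf_congr fun i => ?_
    rw [aux_uA, comap_principal]
    congr 1
  rw [hpi]
  constructor
  · intro hS
    rcases Filter.mem_iInf.1 hS with ⟨I, Ifin, V, hV, rfl⟩
    refine ⟨Ifin.toFinset, ?_⟩
    intro p hp
    rw [Set.mem_iInter]
    intro i
    have h1 : {q : (M → A) × (M → A) | q.1 (i : M) = q.2 (i : M)} ⊆ V i :=
      mem_principal.1 (hV i)
    exact h1 (hp i (Ifin.mem_toFinset.2 i.2))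
  · rintro ⟨F, hF⟩
    refine mem_of_superset ?_ hF
    have : {p : (M → A) × (M → A) | ∀ i ∈ F, p.1 i = p.2 i}
        = ⋂ i ∈ (F : Set M), {p : (M → A) × (M → A) | p.1 i = p.2 i} := by
      ext p; simp
    rw [this]
    exact (biInter_mem F.finite_toSet).2 fun i _ =>
      mem_iInf_of_mem i (mem_principal_self _)

lemma aux_entourage (X : Set (M → A)) (F : Finset M) :
    {p : X × X | ∀ i ∈ F, (p.1 : M → A) i = (p.2 : M → A) i} ∈ uniformity X := by
  rw [uniformity_setCoe]
  exact Filter.preimage_mem_comap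
    ((aux_pi_basis _).2 ⟨F, subset_rfl⟩)

lemma aux_mem_unif (X : Set (M → A)) {U : Set (X × X)} (hU : U ∈ uniformity X) :
    ∃ F : Finset M, ∀ a b : X, (∀ i ∈ F, (a : M → A) i = (b : M → A) i) → (a, b) ∈ U := by
  rw [uniformity_setCoe, Filter.mem_comap] at hU
  rcases hU with ⟨S, hS, hSsub⟩
  rcases (aux_pi_basis S).1 hS with ⟨F, hF⟩
  exact ⟨F, fun a b h => hSsub (hF h)⟩

end aux

/-- Let `M` be a monoid and `A` a finite set. A subshift `X ⊆ A^M` is of finite type if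
and only if `(X,M)` has the pseudo-orbit tracing property. -/
theorem stmt_10 {M A : Type*} [Monoid M] [Finite A] [UniformSpace A] [DiscreteTopology A]
    (X : Set (M → A)) (hXc : IsClosed X)
    (hinv : ∀ (m : M) (x : M → A), x ∈ X → (fun t => x (t * m)) ∈ X) :
    (∃ (W : Finset M) (P : Set (∀ _ : (W : Set M), A)),
        X = {x : M → A | ∀ m : M, (fun w : (W : Set M) => x (w.1 * m)) ∈ P})
    ↔ (∀ U ∈ uniformity {x // x ∈ X}, ∃ K : Finset M, ∃ V ∈ uniformity {x // x ∈ X},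
        ∀ xs : M → {x // x ∈ X},
          (∀ k ∈ K, ∀ m : M,
            ((⟨fun t => (xs m).1 (t * k), hinv k _ (xs m).2⟩ : {x // x ∈ X}), xs (k * m)) ∈ V) →
          ∃ x : {x // x ∈ X}, ∀ m : M,
            ((⟨fun t => x.1 (t * m), hinv m _ x.2⟩ : {x // x ∈ X}), xs m) ∈ U) := by
  classical
  constructor
  · -- SFT → POTP
    rintro ⟨W, P, hX⟩ U hU
    rcases aux_mem_unif X hU with ⟨F, hF⟩
    refine ⟨F ∪ W, {p : X × X | (p.1 : M → A) 1 = (p.2 : M → A) 1}, ?_, ?_⟩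
    · have := aux_entourage X ({1} : Finset M)
      refine mem_of_superset this ?_
      intro p hp
      exact hp 1 (Finset.mem_singleton_self 1)
    · intro xs hpo
      -- pseudo-orbit condition: for k ∈ F ∪ W, (xs m).1 (1 * k) = (xs (k * m)).1 1
      have key : ∀ k ∈ F ∪ W, ∀ m : M, (xs m).1 k = (xs (k * m)).1 1 := by
        intro k hk m
        have := hpo k hk m
        simpa [one_mul] using this
      set y : M → A := fun m => (xs m).1 1 with hy
      have hyX : y ∈ X := by
        rw [hX]
        intro m
        have h1 : (fun w : (W : Set M) => y (w.1 * m))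
            = fun w : (W : Set M) => (xs m).1 (w.1 * 1) := by
          funext w
          have hw : (w.1 : M) ∈ F ∪ W := Finset.mem_union_right _ w.2
          simp only [hy]
          rw [← key w.1 hw m, mul_one]
        rw [h1]
        have := (hX ▸ (xs m).2 : (xs m).1 ∈ {x : M → A | ∀ n : M,
          (fun w : (W : Set M) => x (w.1 * n)) ∈ P})
        exact this 1
      refine ⟨⟨y, hyX⟩, fun m => ?_⟩
      apply hF
      intro i hi
      show y (i * m) = (xs m).1 i
      have := key i (Finset.mem_union_left _ hi) m
      simp only [hy]
      rw [this]
  · -- POTP → SFT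
    intro h
    have hU : {p : X × X | (p.1 : M → A) 1 = (p.2 : M → A) 1} ∈ uniformity X := by
      have := aux_entourage X ({1} : Finset M)
      exact mem_of_superset this fun p hp => hp 1 (Finset.mem_singleton_self 1)
    rcases h _ hU with ⟨K, V, hV, htrace⟩
    rcases aux_mem_unif X hV with ⟨F, hVF⟩
    set W : Finset M := insert 1 (F ∪ F * K) with hW
    refine ⟨W, {p : (∀ _ : (W : Set M), A) | ∃ x ∈ X, ∀ w : (W : Set M), x w.1 = p w}, ?_⟩
    ext y
    constructor
    · intro hyX m
      exact ⟨fun t => y (t * m), hinv m y hyX, fun w => rfl⟩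
    · intro hy
      simp only [mem_setOf_eq] at hy
      choose x hxX hx using hy
      set xs : M → {x // x ∈ X} := fun m => ⟨x m, hxX m⟩ with hxs
      have hmemW : ∀ i ∈ F, ∀ k ∈ K, i * k ∈ W := fun i hi k hk =>
        Finset.mem_insert_of_mem (Finset.mem_union_right _ (Finset.mul_mem_mul hi hk))
      have hFW : ∀ i ∈ F, i ∈ W := fun i hi =>
        Finset.mem_insert_of_mem (Finset.mem_union_left _ hi)
      have h1W : (1 : M) ∈ W := Finset.mem_insert_self _ _
      have hpo : ∀ k ∈ K, ∀ m : M,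
          ((⟨fun t => (xs m).1 (t * k), hinv k _ (xs m).2⟩ : {x // x ∈ X}), xs (k * m)) ∈ V := by
        intro k hk m
        apply hVF
        intro i hi
        show x m (i * k) = x (k * m) i
        have h1 := hx m ⟨i * k, hmemW i hi k hk⟩
        have h2 := hx (k * m) ⟨i, hFW i hi⟩
        simp only at h1 h2
        rw [h1, h2, mul_assoc]
      rcases htrace xs hpo with ⟨z, hz⟩
      have hzy : ∀ m : M, z.1 m = y m := by
        intro m
        have := hz m
        have h2 : z.1 (1 * m) = (xs m).1 1 := this
        have h3 := hx m ⟨1, h1W⟩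
        simp only at h3
        rw [one_mul] at h2 h3
        rw [h2]
        exact h3
      have : z.1 = y := funext hzy
      rw [← this]
      exact z.2
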